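/- Let a, d be coprime integers with d ≥ 1, let c ∈ (1, 18/17), γ = 1/c, and suppose there exist ε > 0 and A ∈ (0, -17/39 + 6γ/13), with 2Aγ ≤ γ - A - ε and 17/39 + 7γ/13 + ε ≤ γ - A - ε, such that π_c(x; d, a) = γ x^{γ-1} π(x; d, a) + γ(1-γ) ∫_2^x u^{γ-2} π(u; d, a) du + O(x^{17/39 + 7γ/13 + ε}). Assume also the Brun–Titchmarsh bound π(y; d, a) ≪ y/(φ(d) log(y/d)) for y ≥ 2d. Then there exists C > 0 such that for 1 ≤ d ≤ x^A, π_c(x; d, a) ≤ C x^γ / (φ(d) log x). -/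

import Mathlib

open scoped Classical

/-- π(x; d, a): the number of primes p ≤ x with p ≡ a (mod d). -/
noncomputable def primesInAP (d : ℕ) (a : ℤ) (x : ℝ) : ℝ :=
  (((Finset.Icc 1 ⌊x⌋₊).filter
      (fun p : ℕ => p.Prime ∧ (p : ℤ) % (d : ℤ) = a % (d : ℤ))).card : ℝ)

/-- π_c(x; d, a): the number of Piatetski-Shapiro primes p ≤ x with p ≡ a (mod d). -/
noncomputable def psPrimesInAP (c : ℝ) (d : ℕ) (a : ℤ) (x : ℝ) : ℝ :=
  (((Finset.Icc 1 ⌊x⌋₊).filter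
      (fun p : ℕ => p.Prime ∧ (p : ℤ) % (d : ℤ) = a % (d : ℤ) ∧
        ∃ n : ℕ, 0 < n ∧ (p : ℤ) = ⌊(n : ℝ) ^ c⌋)).card : ℝ)

lemma primesInAP_nonneg (d : ℕ) (a : ℤ) (x : ℝ) : 0 ≤ primesInAP d a x := by
  unfold primesInAP; positivity

lemma primesInAP_mono (d : ℕ) (a : ℤ) : Monotone (primesInAP d a) := by
  intro u v huv
  unfold primesInAP
  exact_mod_cast Finset.card_le_card (Finset.filter_subset_filter _
    (Finset.Icc_subset_Icc le_rfl (Nat.floor_mono huv)))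

lemma primesInAP_le_self (d : ℕ) (a : ℤ) (x : ℝ) (hx : 0 ≤ x) :
    primesInAP d a x ≤ x := by
  unfold primesInAP
  calc (((Finset.Icc 1 ⌊x⌋₊).filter _).card : ℝ)
      ≤ ((Finset.Icc 1 ⌊x⌋₊).card : ℝ) := by
        exact_mod_cast Finset.card_le_card (Finset.filter_subset _ _)
    _ ≤ x := by
        rw [Nat.card_Icc]
        simp only [Nat.add_sub_cancel]
        exact_mod_cast (Nat.floor_le hx)

lemma measurable_primesInAP (d : ℕ) (a : ℤ) : Measurable (primesInAP d a) :=
  (primesInAP_mono d a).measurable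

open MeasureTheory in
lemma intervalIntegrable_aux (d : ℕ) (a : ℤ) (r : ℝ) (hr : r ≤ 0) (x y : ℝ)
    (hx : 1 ≤ x) (hxy : x ≤ y) :
    IntervalIntegrable (fun u => u ^ r * primesInAP d a u) volume x y := by
  rw [intervalIntegrable_iff, Set.uIoc_of_le hxy]
  apply Integrable.mono' (g := fun _ => y)
    (integrableOn_const measure_Ioc_lt_top.ne)
  · have hcont : ContinuousOn (fun u : ℝ => u ^ r) (Set.Ioc x y) := fun u hu =>
      (Real.continuousAt_rpow_const u r (Or.inl (by cases hu with
        | intro h1 h2 => exact ne_of_gt (lt_of_le_of_lt (by linarith) h1)))).continuousWithinAt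
    exact (hcont.aestronglyMeasurable measurableSet_Ioc).mul
      (measurable_primesInAP d a).aestronglyMeasurable
  · filter_upwards [ae_restrict_mem measurableSet_Ioc] with u hu
    obtain ⟨hu1, hu2⟩ := hu
    have h1u : (1:ℝ) ≤ u := le_of_lt (lt_of_le_of_lt hx hu1)
    have h0u : (0:ℝ) ≤ u := by linarith
    rw [Real.norm_eq_abs, abs_of_nonneg (mul_nonneg (Real.rpow_nonneg h0u r) (primesInAP_nonneg d a u))]
    calc u ^ r * primesInAP d a u ≤ 1 * u := by
          apply mul_le_mul (Real.rpow_le_one_of_one_le_of_nonpos h1u hr)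
            (primesInAP_le_self d a u h0u) (primesInAP_nonneg d a u) zero_le_one
      _ ≤ y := by linarith

set_option maxHeartbeats 1000000 in
theorem stmt_17 (c γ A ε : ℝ) (a : ℤ) (d : ℕ) (hd : 1 ≤ d)
    (hcop : IsCoprime a (d : ℤ))
    (hc1 : 1 < c) (hc2 : c < 18 / 17) (hγ : γ = 1 / c) (hε : 0 < ε)
    (hA0 : 0 < A) (hA1 : A < -17 / 39 + 6 * γ / 13)
    (h1 : 2 * A * γ ≤ γ - A - ε) (h2 : 17 / 39 + 7 * γ / 13 + ε ≤ γ - A - ε)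
    (Hasymp : ∃ C₀ > 0, ∀ x : ℝ, 2 ≤ x →
      |psPrimesInAP c d a x
          - (γ * x ^ (γ - 1) * primesInAP d a x
             + γ * (1 - γ) * ∫ u in (2 : ℝ)..x, u ^ (γ - 2) * primesInAP d a u)|
        ≤ C₀ * x ^ (17 / 39 + 7 * γ / 13 + ε))
    (HBT : ∃ C₁ > 0, ∀ y : ℝ, 2 * d ≤ y →
      primesInAP d a y ≤ C₁ * y / ((d.totient : ℝ) * Real.log (y / d))) :
    ∃ C > 0, ∀ x : ℝ, 2 ≤ x → (d : ℝ) ≤ x ^ A →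
      psPrimesInAP c d a x ≤ C * x ^ γ / ((d.totient : ℝ) * Real.log x) := by
  obtain ⟨C₀, hC₀, hAs⟩ := Hasymp
  obtain ⟨C₁, hC₁, hBT⟩ := HBT
  have hc0 : (0:ℝ) < c := by linarith
  have hγ0 : 0 < γ := by rw [hγ]; positivity
  have hγlt1 : γ < 1 := by rw [hγ, div_lt_one hc0]; linarith
  have hA39 : A ≤ 1/39 := by linarith
  have hexp0 : 0 < γ - A - ε := lt_of_lt_of_le (by positivity) h2
  refine ⟨2*C₁ + C₁/A + 2/ε + C₀/ε, by positivity, ?_⟩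
  intro x hx hdx
  have hx0 : (0:ℝ) < x := by linarith
  have hx1 : (1:ℝ) ≤ x := by linarith
  have hlog : 0 < Real.log x := Real.log_pos (by linarith)
  have hφ : (0:ℝ) < d.totient := by exact_mod_cast Nat.totient_pos.mpr (by omega)
  have hd1 : (1:ℝ) ≤ d := by exact_mod_cast hd
  have hd0 : (0:ℝ) < d := by linarith
  set D := (d.totient : ℝ) * Real.log x with hD
  have hD0 : 0 < D := mul_pos hφ hlog
  set P := x ^ γ / D with hP
  have hP0 : 0 < P := div_pos (Real.rpow_pos_of_pos hx0 γ) hD0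
  -- the splitting point t
  set t := max 2 (x ^ (2*A)) with ht
  have h2t : (2:ℝ) ≤ t := le_max_left _ _
  have hx2A : x ^ (2*A) ≤ x := by
    calc x ^ (2*A) ≤ x ^ (1:ℝ) := Real.rpow_le_rpow_of_exponent_le hx1 (by linarith)
      _ = x := Real.rpow_one x
  have htx : t ≤ x := max_le hx hx2A
  have ht0 : (0:ℝ) < t := by linarith
  -- 2d ≤ t
  have h2dt : 2 * (d:ℝ) ≤ t := by
    by_cases hd2 : (2:ℝ) ≤ (d:ℝ)
    · have hxA2 : (2:ℝ) ≤ x ^ A := le_trans hd2 hdx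
      calc 2*(d:ℝ) ≤ x^A * x^A :=
            mul_le_mul hxA2 hdx (by linarith) (Real.rpow_nonneg hx0.le A)
        _ = x ^ (2*A) := by rw [← Real.rpow_add hx0]; ring_nf
        _ ≤ t := le_max_right _ _
    · have : d = 1 := by
        have : d < 2 := by exact_mod_cast not_le.mp hd2
        omega
      rw [this]; push_cast; linarith
  -- log(u/d) ≥ A log x for u ≥ t
  have hlog_ud : ∀ u : ℝ, t ≤ u → A * Real.log x ≤ Real.log (u / d) := by
    intro u hu
    have hu0 : (0:ℝ) < u := lt_of_lt_of_le ht0 hu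
    have hxA_le : x ^ A ≤ u / d := by
      rw [le_div_iff₀ hd0]
      calc x^A * d ≤ x^A * x^A :=
            mul_le_mul_of_nonneg_left hdx (Real.rpow_nonneg hx0.le A)
        _ = x^(2*A) := by rw [← Real.rpow_add hx0]; ring_nf
        _ ≤ t := le_max_right _ _
        _ ≤ u := hu
    calc A * Real.log x = Real.log (x ^ A) := (Real.log_rpow hx0 A).symm
      _ ≤ Real.log (u/d) := by
          rw [Real.log_le_log_iff (Real.rpow_pos_of_pos hx0 A) (div_pos hu0 hd0)]
          exact hxA_le
  have hAlog : 0 < A * Real.log x := mul_pos hA0 hlog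
  -- BT consequence on [t, x]
  set K := C₁ / ((d.totient : ℝ) * (A * Real.log x)) with hK
  have hK0 : 0 ≤ K := div_nonneg hC₁.le (mul_pos hφ hAlog).le
  have hBT' : ∀ u : ℝ, t ≤ u → primesInAP d a u ≤ K * u := by
    intro u hu
    have hu0 : (0:ℝ) < u := lt_of_lt_of_le ht0 hu
    have h2du : 2 * (d:ℝ) ≤ u := le_trans h2dt hu
    calc primesInAP d a u ≤ C₁ * u / ((d.totient : ℝ) * Real.log (u/d)) := hBT u h2du
      _ ≤ C₁ * u / ((d.totient : ℝ) * (A * Real.log x)) := by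
          apply div_le_div_of_nonneg_left (by positivity) (mul_pos hφ hAlog)
          exact mul_le_mul_of_nonneg_left (hlog_ud u hu) hφ.le
      _ = K * u := by rw [hK]; ring
  -- key inequality : x ^ (γ - A - ε) ≤ (1/ε) * P
  have hkey : x ^ (γ - A - ε) ≤ (1/ε) * P := by
    have hlogle : ε * Real.log x ≤ x ^ ε := by
      have h3 := Real.log_le_sub_one_of_pos (Real.rpow_pos_of_pos hx0 ε)
      rw [Real.log_rpow hx0] at h3
      nlinarith [Real.rpow_pos_of_pos hx0 ε]
    have hφd : (d.totient : ℝ) ≤ x ^ A :=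
      le_trans (by exact_mod_cast Nat.totient_le d) hdx
    have hxsum : x ^ (γ-A-ε) * x ^ A * x ^ ε = x ^ γ := by
      rw [← Real.rpow_add hx0, ← Real.rpow_add hx0]; ring_nf
    have hmain : x ^ (γ-A-ε) * D ≤ (1/ε) * x ^ γ := by
      rw [hD]
      calc x ^ (γ-A-ε) * ((d.totient:ℝ) * Real.log x)
          ≤ x ^ (γ-A-ε) * (x^A * (x^ε/ε)) := by
            apply mul_le_mul_of_nonneg_left _ (Real.rpow_nonneg hx0.le _)
            apply mul_le_mul hφd _ hlog.le (Real.rpow_nonneg hx0.le A)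
            rw [le_div_iff₀ hε]; linarith
        _ = (1/ε) * x ^ γ := by rw [← hxsum]; field_simp
    rw [hP, ← mul_div_assoc, le_div_iff₀ hD0]
    exact hmain
  -- pointwise power identity
  have hpow : ∀ u : ℝ, 0 < u → u ^ (γ-2) * u = u ^ (γ-1) := by
    intro u hu0
    have h := Real.rpow_add hu0 (γ-2) 1
    rw [Real.rpow_one] at h
    rw [← h]; ring_nf
  -- integrability
  have hint1 := intervalIntegrable_aux d a (γ-2) (by linarith) 2 t (by norm_num) h2t
  have hint2 := intervalIntegrable_aux d a (γ-2) (by linarith) t x (by linarith) htx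
  have hsplit : (∫ u in (2:ℝ)..x, u ^ (γ-2) * primesInAP d a u)
      = (∫ u in (2:ℝ)..t, u ^ (γ-2) * primesInAP d a u)
        + ∫ u in t..x, u ^ (γ-2) * primesInAP d a u :=
    (intervalIntegral.integral_add_adjacent_intervals hint1 hint2).symm
  -- bound on first piece of the integral
  have hrint1 : IntervalIntegrable (fun u : ℝ => u ^ (γ-1)) MeasureTheory.volume 2 t :=
    intervalIntegral.intervalIntegrable_rpow' (by linarith)
  have hI1 : (∫ u in (2:ℝ)..t, u ^ (γ-2) * primesInAP d a u) ≤ t ^ γ / γ := by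
    have hb : (∫ u in (2:ℝ)..t, u ^ (γ-1)) = (t ^ γ - 2 ^ γ) / γ := by
      rw [integral_rpow (Or.inl (by linarith : (-1:ℝ) < γ-1))]
      norm_num
    calc (∫ u in (2:ℝ)..t, u ^ (γ-2) * primesInAP d a u)
        ≤ ∫ u in (2:ℝ)..t, u ^ (γ-1) := by
          apply intervalIntegral.integral_mono_on h2t hint1 hrint1
          intro u hu
          obtain ⟨hu1, hu2⟩ := hu
          have hu0 : (0:ℝ) < u := by linarith
          calc u ^ (γ-2) * primesInAP d a u ≤ u ^ (γ-2) * u :=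
                mul_le_mul_of_nonneg_left (primesInAP_le_self d a u hu0.le)
                  (Real.rpow_nonneg hu0.le _)
            _ = u ^ (γ-1) := hpow u hu0
      _ = (t ^ γ - 2 ^ γ) / γ := hb
      _ ≤ t ^ γ / γ := by
          gcongr
          linarith [Real.rpow_nonneg (by norm_num : (0:ℝ) ≤ 2) γ]
  have htγ : t ^ γ ≤ 2 * x ^ (γ - A - ε) := by
    have hge1 : (1:ℝ) ≤ x ^ (γ-A-ε) := Real.one_le_rpow hx1 hexp0.le
    rcases max_cases (α := ℝ) 2 (x ^ (2*A)) with ⟨heq, _⟩ | ⟨heq, _⟩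
    · rw [ht, heq]
      have h2γ : (2:ℝ) ^ γ ≤ 2 := by
        calc (2:ℝ)^γ ≤ 2^(1:ℝ) := Real.rpow_le_rpow_of_exponent_le one_le_two hγlt1.le
          _ = 2 := Real.rpow_one 2
      linarith
    · rw [ht, heq]
      calc (x^(2*A))^γ = x ^ (2*A*γ) := by
            rw [← Real.rpow_mul hx0.le]
        _ ≤ x ^ (γ-A-ε) := Real.rpow_le_rpow_of_exponent_le hx1 h1
        _ ≤ 2 * x^(γ-A-ε) := by linarith
  -- bound on second piece of the integral
  have hrint2 : IntervalIntegrable (fun u : ℝ => K * u ^ (γ-1)) MeasureTheory.volume t x :=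
    (intervalIntegral.intervalIntegrable_rpow' (by linarith)).const_mul K
  have hI2 : (∫ u in t..x, u ^ (γ-2) * primesInAP d a u) ≤ K * (x ^ γ / γ) := by
    calc (∫ u in t..x, u ^ (γ-2) * primesInAP d a u)
        ≤ ∫ u in t..x, K * u ^ (γ-1) := by
          apply intervalIntegral.integral_mono_on htx hint2 hrint2
          intro u hu
          obtain ⟨hu1, hu2⟩ := hu
          have hu0 : (0:ℝ) < u := lt_of_lt_of_le ht0 hu1
          calc u ^ (γ-2) * primesInAP d a u ≤ u ^ (γ-2) * (K * u) :=
                mul_le_mul_of_nonneg_left (hBT' u hu1) (Real.rpow_nonneg hu0.le _)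
            _ = K * (u ^ (γ-2) * u) := by ring
            _ = K * u ^ (γ-1) := by rw [hpow u hu0]
      _ = K * ∫ u in t..x, u ^ (γ-1) := intervalIntegral.integral_const_mul K _
      _ ≤ K * (x ^ γ / γ) := by
          apply mul_le_mul_of_nonneg_left _ hK0
          rw [integral_rpow (Or.inl (by linarith : (-1:ℝ) < γ-1))]
          norm_num
          gcongr
          linarith [Real.rpow_nonneg ht0.le γ]
  -- main term 1
  have hE1 : γ * x ^ (γ-1) * primesInAP d a x ≤ (2*C₁) * P := by
    have hlogxd : (1/2) * Real.log x ≤ Real.log (x / d) := by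
      have hxhalf : x ^ ((1:ℝ)/2) ≤ x / d := by
        rw [le_div_iff₀ hd0]
        calc x ^ ((1:ℝ)/2) * d ≤ x ^ ((1:ℝ)/2) * x ^ A :=
              mul_le_mul_of_nonneg_left hdx (Real.rpow_nonneg hx0.le _)
          _ ≤ x ^ ((1:ℝ)/2) * x ^ ((1:ℝ)/2) := by
              apply mul_le_mul_of_nonneg_left
                (Real.rpow_le_rpow_of_exponent_le hx1 (by linarith))
                (Real.rpow_nonneg hx0.le _)
          _ = x := by rw [← Real.rpow_add hx0]; norm_num
      calc (1/2) * Real.log x = Real.log (x ^ ((1:ℝ)/2)) := (Real.log_rpow hx0 _).symm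
        _ ≤ Real.log (x / d) := by
            rw [Real.log_le_log_iff (Real.rpow_pos_of_pos hx0 _) (div_pos hx0 hd0)]
            exact hxhalf
    have hπx : primesInAP d a x ≤ 2 * C₁ * x / D := by
      calc primesInAP d a x ≤ C₁ * x / ((d.totient : ℝ) * Real.log (x / d)) :=
            hBT x (le_trans h2dt htx)
        _ ≤ C₁ * x / ((d.totient : ℝ) * ((1/2) * Real.log x)) := by
            apply div_le_div_of_nonneg_left (mul_nonneg hC₁.le hx0.le)
              (mul_pos hφ (mul_pos (by norm_num) hlog))
            exact mul_le_mul_of_nonneg_left hlogxd hφ.le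
        _ = 2 * C₁ * x / D := by
            rw [hD]
            rw [div_eq_div_iff (by positivity) (by positivity)]
            ring
    have hxγ : x ^ (γ-1) * x = x ^ γ := by
      have h := Real.rpow_add hx0 (γ-1) 1
      rw [Real.rpow_one] at h
      rw [← h]; ring_nf
    calc γ * x ^ (γ-1) * primesInAP d a x
        ≤ 1 * x ^ (γ-1) * (2 * C₁ * x / D) := by
          apply mul_le_mul (by nlinarith [Real.rpow_nonneg hx0.le (γ-1)]) hπx
            (primesInAP_nonneg d a x)
            (by positivity)
      _ = (2*C₁) * P := by
          rw [hP, ← hxγ, ← mul_div_assoc]; ring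
  -- final assembly
  set I1 := (∫ u in (2:ℝ)..t, u ^ (γ-2) * primesInAP d a u) with hI1def
  set I2 := (∫ u in t..x, u ^ (γ-2) * primesInAP d a u) with hI2def
  have hcoef : 0 ≤ γ * (1-γ) := by nlinarith
  have hE4 : C₀ * x ^ (17/39 + 7*γ/13 + ε) ≤ (C₀/ε) * P := by
    calc C₀ * x ^ (17/39+7*γ/13+ε) ≤ C₀ * x ^ (γ-A-ε) :=
          mul_le_mul_of_nonneg_left (Real.rpow_le_rpow_of_exponent_le hx1 h2) hC₀.le
      _ ≤ C₀ * ((1/ε) * P) := mul_le_mul_of_nonneg_left hkey hC₀.le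
      _ = (C₀/ε) * P := by ring
  have hE2a : γ*(1-γ) * I1 ≤ (2/ε) * P := by
    calc γ*(1-γ)*I1 ≤ γ*(1-γ)*(t^γ/γ) := mul_le_mul_of_nonneg_left hI1 hcoef
      _ = (1-γ)*t^γ := by field_simp
      _ ≤ (1-γ)*(2*x^(γ-A-ε)) := mul_le_mul_of_nonneg_left htγ (by linarith)
      _ ≤ 1*(2*x^(γ-A-ε)) := mul_le_mul_of_nonneg_right (by linarith)
          (by positivity)
      _ ≤ 2*((1/ε)*P) := by rw [one_mul]; linarith
      _ = (2/ε)*P := by ring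
  have hE2b : γ*(1-γ) * I2 ≤ (C₁/A) * P := by
    calc γ*(1-γ)*I2 ≤ γ*(1-γ)*(K*(x^γ/γ)) := mul_le_mul_of_nonneg_left hI2 hcoef
      _ = (1-γ)*(K*x^γ) := by field_simp
      _ ≤ 1*(K*x^γ) := mul_le_mul_of_nonneg_right (by linarith)
          (mul_nonneg hK0 (Real.rpow_nonneg hx0.le γ))
      _ = (C₁/A)*P := by
          rw [one_mul, hK, hP, hD]
          field_simp
  have h5 := (abs_le.mp (hAs x hx)).2
  rw [hsplit] at h5
  have hdist : γ*(1-γ)*(I1+I2) = γ*(1-γ)*I1 + γ*(1-γ)*I2 := by ring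
  have hCP : (2*C₁ + C₁/A + 2/ε + C₀/ε) * x ^ γ / D
      = (2*C₁)*P + (C₁/A)*P + (2/ε)*P + (C₀/ε)*P := by
    rw [hP]; ring
  rw [hCP]
  linarith [hE1, hE2a, hE2b, hE4, h5, hdist]
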